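/- For any two linear operators A, B on a finite-dimensional Hilbert space and any density matrix ρ, the sum of variances satisfies ⟨ΔA⟩²_ρ + ⟨ΔB⟩²_ρ = ±(1/2)⟨i([A†,B] + [A,B†])⟩_ρ + (1/2)⟨M∓†M∓ + N± N±†⟩_ρ, where M∓ = A ∓ iB − ⟨A ∓ iB⟩_ρ I and N± = A ± iB − ⟨A ± iB⟩_ρ I (with consistent choice of signs; both sign choices give valid identities). -/

import Mathlib

open Matrix
open scoped ComplexOrder

/-- Variance of an arbitrary operator:
`⟨ΔA⟩²_ρ = Tr[ρ(A†A + AA†)/2] − |Tr(Aρ)|²`. -/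
noncomputable def varGen {d : ℕ} (ρ A : Matrix (Fin d) (Fin d) ℂ) : ℂ :=
  (ρ * ((1 / 2 : ℂ) • (Aᴴ * A + A * Aᴴ))).trace - (‖(A * ρ).trace‖ : ℂ) ^ 2

/-- Commutator of matrices. -/
noncomputable def mcomm {d : ℕ} (X Y : Matrix (Fin d) (Fin d) ℂ) :
    Matrix (Fin d) (Fin d) ℂ :=
  X * Y - Y * X

lemma conj_trace {d : ℕ} (ρ A : Matrix (Fin d) (Fin d) ℂ) (hρ : ρ.PosSemidef) :
    (Aᴴ * ρ).trace = star ((A * ρ).trace) := by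
  rw [← Matrix.trace_conjTranspose, Matrix.conjTranspose_mul, hρ.isHermitian.eq,
    Matrix.trace_mul_comm]

lemma myabs_sq {z : ℂ} : ((‖z‖ : ℂ)) ^ 2 = z * star z := by
  have h : ((‖z‖ : ℂ)) ^ 2 = ((‖z‖ ^ 2 : ℝ) : ℂ) := by norm_cast
  rw [h, Complex.sq_norm, ← Complex.mul_conj]
  rfl

/-- Sum uncertainty equality for arbitrary operators and mixed states; `e = 1`
corresponds to the upper choice of signs and `e = -1` to the lower one. -/
theorem stmt5 {d : ℕ} (ρ A B : Matrix (Fin d) (Fin d) ℂ)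
    (hρ : ρ.PosSemidef) (htr : ρ.trace = 1)
    (e : ℂ) (he : e = 1 ∨ e = -1) :
    let M : Matrix (Fin d) (Fin d) ℂ :=
      A - (e * Complex.I) • B - (((A - (e * Complex.I) • B) * ρ).trace) • 1
    let N : Matrix (Fin d) (Fin d) ℂ :=
      A + (e * Complex.I) • B - (((A + (e * Complex.I) • B) * ρ).trace) • 1
    varGen ρ A + varGen ρ B =
      e * (1 / 2 : ℂ) *
          ((Complex.I • (mcomm Aᴴ B + mcomm A Bᴴ)) * ρ).trace +
        (1 / 2 : ℂ) * ((Mᴴ * M + N * Nᴴ) * ρ).trace := by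
  intro M N
  simp only [varGen, mcomm, M, N]
  rw [myabs_sq, myabs_sq]
  simp only [Matrix.mul_add, Matrix.add_mul, Matrix.mul_sub, Matrix.sub_mul,
    Matrix.smul_mul, Matrix.mul_smul, Matrix.conjTranspose_sub, Matrix.conjTranspose_add,
    Matrix.conjTranspose_smul, Matrix.conjTranspose_one, Matrix.one_mul, Matrix.mul_one,
    Matrix.trace_add, Matrix.trace_sub, Matrix.trace_smul, smul_eq_mul,
    smul_smul, map_sub, map_add, _root_.map_mul, Complex.conj_I, Matrix.mul_assoc, htr,
    Matrix.trace_mul_comm ρ, smul_add, smul_sub]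
  rw [conj_trace ρ A hρ, conj_trace ρ B hρ]
  rcases he with h | h <;> subst h <;>
    · ring_nf
      simp only [Complex.star_def, Complex.conj_I, map_neg]
      ring_nf
      simp only [Complex.I_sq]
      ring
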